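/- Let (G,B,m,w) be a connected weighted finite graph with boundary, |B| ≥ 2, such that σ₂ = w₀·V_B / ((V_B − m₀)² · d_B). Then there is a unique path P : v₀ ∼ v₁ ∼ ⋯ ∼ v_{d_B} in G with v₀, v_{d_B} ∈ B (so the two boundary vertices are joined by a unique path, and it has length d_B), and moreover w_{v_{i−1}v_i} = w₀ for all i = 1, 2, …, d_B. -/

import Mathlib

open Finset

variable {V : Type*}

/-- The Dirichlet energy `⟨du,du⟩ = ∑_{{x,y}∈E} (u y - u x)^2 w_{xy}` of a function `u`,
where the edge weight `w` is symmetric and vanishes on non-adjacent pairs. -/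
noncomputable def energy [Fintype V] (w : V → V → ℝ) (u : V → ℝ) : ℝ :=
  (1 / 2) * ∑ x, ∑ y, (u y - u x) ^ 2 * w x y

/-- The Dirichlet pairing `⟨du,dv⟩ = ∑_{{x,y}∈E} (u y - u x)(v y - v x) w_{xy}`. -/
noncomputable def dirPairing [Fintype V] (w : V → V → ℝ) (u v : V → ℝ) : ℝ :=
  (1 / 2) * ∑ x, ∑ y, (u y - u x) * (v y - v x) * w x y

/-- The weighted graph Laplacian `Δu(x) = (1/m_x) ∑_y (u y - u x) w_{xy}`. -/
noncomputable def glap [Fintype V] (m : V → ℝ) (w : V → V → ℝ) (u : V → ℝ) (x : V) : ℝ :=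
  (1 / m x) * ∑ y, (u y - u x) * w x y

/-- `d_B`, the maximal graph distance between two boundary vertices. -/
noncomputable def boundaryDiam (G : SimpleGraph V) (B : Finset V) : ℕ :=
  (B ×ˢ B).sup fun p => G.dist p.1 p.2

/-- `w₀`, the minimal edge weight. -/
noncomputable def minEdgeWeight (G : SimpleGraph V) (w : V → V → ℝ) : ℝ :=
  sInf {r : ℝ | ∃ x y, G.Adj x y ∧ w x y = r}

/-- `m₀`, the minimal vertex measure on the boundary. -/
noncomputable def minBoundaryMeasure (B : Finset V) (m : V → ℝ) : ℝ :=
  sInf {r : ℝ | ∃ x ∈ B, m x = r}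

/-- The second Steklov eigenvalue `σ₂`, via its variational characterization: the infimum of
the Rayleigh quotients `E(u)/⟨u,u⟩_B` over functions `u` on `V` whose boundary values are
nonzero and have weighted mean zero.  (Since the harmonic extension minimizes the Dirichlet
energy among all extensions of given boundary data, this agrees with the second eigenvalue of
the Steklov operator.) -/
noncomputable def sigma2 [Fintype V] (B : Finset V) (m : V → ℝ) (w : V → V → ℝ) : ℝ :=
  sInf {r : ℝ | ∃ u : V → ℝ, (∃ x ∈ B, u x ≠ 0) ∧ (∑ x ∈ B, u x * m x = 0) ∧
    r = energy w u / ∑ x ∈ B, (u x) ^ 2 * m x}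

namespace PerrinAux

lemma list_sum_nonneg_zero {l : List ℝ} (h : ∀ x ∈ l, 0 ≤ x) (hs : l.sum = 0) :
    ∀ x ∈ l, x = 0 := by
  induction l with
  | nil => simp
  | cons a t ih =>
    simp only [List.sum_cons] at hs
    have ha := h a (by simp)
    have ht : 0 ≤ t.sum := List.sum_nonneg (fun x hx => h x (List.mem_cons_of_mem _ hx))
    have ha0 : a = 0 := by linarith
    have hts : t.sum = 0 := by linarith
    intro x hx
    rcases List.mem_cons.mp hx with rfl | hx
    · exact ha0
    · exact ih (fun y hy => h y (List.mem_cons_of_mem _ hy)) hts x hx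

lemma list_sum_map_sub {α : Type*} (l : List α) (f g : α → ℝ) :
    (l.map fun x => f x - g x).sum = (l.map f).sum - (l.map g).sum := by
  induction l with
  | nil => simp
  | cons a t ih => simp [ih]; ring

lemma list_sum_map_mul_left {α : Type*} (l : List α) (c : ℝ) (f : α → ℝ) :
    (l.map fun x => c * f x).sum = c * (l.map f).sum := by
  induction l with
  | nil => simp
  | cons a t ih => simp [ih]; ring

lemma list_sum_sq_expand {α : Type*} (l : List α) (f : α → ℝ) (t : ℝ) :
    (l.map fun x => (f x - t) ^ 2).sum
      = (l.map fun x => f x ^ 2).sum - 2 * t * (l.map f).sum + l.length * t ^ 2 := by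
  induction l with
  | nil => simp
  | cons a tl ih =>
    simp only [List.map_cons, List.sum_cons, List.length_cons, ih]
    push_cast
    ring

lemma list_sum_ite_filter {α : Type*} (l : List α) (P : α → Prop) [DecidablePred P] (t : ℝ) :
    (l.map fun x => if P x then t else 0).sum = (l.filter fun x => P x).length * t := by
  induction l with
  | nil => simp
  | cons a tl ih =>
    by_cases h : P a <;> simp [List.filter_cons, h, ih] <;> push_cast <;> ring

lemma walk_telescope {G : SimpleGraph V} (u : V → ℝ) :
    ∀ {x y : V} (q : G.Walk x y),
      (q.darts.map fun d => u d.toProd.2 - u d.toProd.1).sum = u y - u x := by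
  intro x y q
  induction q with
  | nil => simp
  | cons h q ih => simp [ih]; try ring

/-- A path whose edge set contains the edges of another path between the same endpoints
equals that path. -/
lemma path_eq_of_edges_subset {G : SimpleGraph V} {b : V} :
    ∀ {c : V} (P q : G.Walk c b), P.IsPath → q.IsPath →
      (∀ e ∈ P.edges, e ∈ q.edges) → q = P := by
  intro c P
  induction P with
  | nil =>
    intro q _ hq _
    exact (SimpleGraph.Walk.isPath_iff_eq_nil (p := q)).mp hq
  | @cons c v₁ b h P' ih =>
    intro q hP hq hsub
    have hePq : s(c, v₁) ∈ q.edges := hsub _ (by simp)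
    cases q with
    | nil =>
      exfalso
      have := SimpleGraph.Walk.isPath_iff_eq_nil.mp hP
      simp at this
    | @cons _ z _ h' q' =>
      obtain ⟨dq, hdq, hedq⟩ := List.mem_map.mp hePq
      have hdq2 : dq.toProd = (c, v₁) ∨ dq.toProd = (v₁, c) := by
        rcases SimpleGraph.dart_edge_eq_mk'_iff'.mp hedq with ⟨h1, h2⟩ | ⟨h1, h2⟩
        · left; ext <;> simp [h1, h2]
        · right; ext <;> simp [h1, h2]
      have hcns : c ∉ q'.support := by
        have := hq.support_nodup
        simp only [SimpleGraph.Walk.support_cons, List.nodup_cons] at this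
        exact this.1
      have hdq3 : dq.toProd = (c, v₁) := by
        rcases hdq2 with h1 | h1
        · exact h1
        · exfalso
          have hmem : dq.toProd.2 ∈ (SimpleGraph.Walk.cons h' q').support.tail := by
            rw [← SimpleGraph.Walk.map_snd_darts]
            exact List.mem_map_of_mem hdq
          rw [h1] at hmem
          simp only [SimpleGraph.Walk.support_cons, List.tail_cons] at hmem
          exact hcns hmem
      have hz : z = v₁ := by
        simp only [SimpleGraph.Walk.darts_cons, List.mem_cons] at hdq
        rcases hdq with rfl | hdq
        · simpa using congrArg Prod.snd hdq3
        · exfalso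
          have hmem : dq.toProd.1 ∈ q'.support :=
            SimpleGraph.Walk.dart_fst_mem_support_of_mem_darts _ hdq
          rw [hdq3] at hmem
          exact hcns hmem
      subst hz
      have hq' : q'.IsPath := hq.of_cons
      have hP' : P'.IsPath := hP.of_cons
      have hsub' : ∀ e ∈ P'.edges, e ∈ q'.edges := by
        intro e he
        have heq : e ∈ (SimpleGraph.Walk.cons h' q').edges := hsub _ (by simp [he])
        simp only [SimpleGraph.Walk.edges_cons, List.mem_cons] at heq
        rcases heq with rfl | heq
        · exfalso
          have hnd := hP.edges_nodup
          simp only [SimpleGraph.Walk.edges_cons, List.nodup_cons] at hnd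
          exact hnd.1 he
        · exact heq
      have : q' = P' := ih q' hP' hq' hsub'
      subst this
      rfl

lemma energy_decomp [Fintype V] [DecidableEq V] (G : SimpleGraph V) (w : V → V → ℝ)
    (hw_symm : ∀ x y, w x y = w y x) (u : V → ℝ)
    {a b : V} (p : G.Walk a b) (hnd : p.edges.Nodup) :
    ∃ C : Finset (V × V),
      energy w u =
        (p.darts.map fun d => (u d.toProd.2 - u d.toProd.1) ^ 2 * w d.toProd.1 d.toProd.2).sum
          + (1 / 2) * ∑ z ∈ C, (u z.2 - u z.1) ^ 2 * w z.1 z.2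
      ∧ ∀ x y, G.Adj x y → s(x, y) ∉ p.edges → (x, y) ∈ C := by
  classical
  set F : V × V → ℝ := fun z => (u z.2 - u z.1) ^ 2 * w z.1 z.2 with hF
  have hedges : p.edges = p.darts.map SimpleGraph.Dart.edge := rfl
  have hdnd : p.darts.Nodup := by
    rw [hedges] at hnd; exact hnd.of_map
  have hinj : ∀ d1 ∈ p.darts, ∀ d2 ∈ p.darts, d1.edge = d2.edge → d1 = d2 := by
    rw [hedges] at hnd
    exact fun d1 h1 d2 h2 he => List.inj_on_of_nodup_map hnd h1 h2 he
  set l1 : List (V × V) := p.darts.map SimpleGraph.Dart.toProd with hl1def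
  set l2 : List (V × V) := p.darts.map (fun d => d.toProd.swap) with hl2def
  have hl1 : l1.Nodup := hdnd.map SimpleGraph.Dart.toProd_injective
  have hl2 : l2.Nodup := hdnd.map (fun d1 d2 h =>
    SimpleGraph.Dart.toProd_injective (Prod.swap_injective h))
  have hdisj : l1.Disjoint l2 := by
    intro z hz1 hz2
    obtain ⟨d1, hd1, hzd1⟩ := List.mem_map.mp hz1
    obtain ⟨d2, hd2, hzd2⟩ := List.mem_map.mp hz2
    have he : d1.edge = d2.edge := by
      unfold SimpleGraph.Dart.edge
      rw [hzd1, ← hzd2, Sym2.mk_prod_swap_eq]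
      rfl
    have h12 : d1 = d2 := hinj _ hd1 _ hd2 he
    subst h12
    have e1 := congrArg Prod.fst hzd1
    have e2 := congrArg Prod.fst hzd2
    simp only [Prod.fst_swap] at e1 e2
    exact d1.adj.ne (e1.trans e2.symm)
  have hl12 : (l1 ++ l2).Nodup := List.Nodup.append hl1 hl2 hdisj
  set Dfin : Finset (V × V) := (l1 ++ l2).toFinset with hDfin
  have hsub : Dfin ⊆ Finset.univ ×ˢ Finset.univ := fun z _ => by simp
  set C : Finset (V × V) := (Finset.univ ×ˢ Finset.univ) \ Dfin with hC
  refine ⟨C, ?_, ?_⟩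
  · have htot : ∑ z ∈ Finset.univ ×ˢ Finset.univ, F z
        = ∑ z ∈ C, F z + ∑ z ∈ Dfin, F z := (Finset.sum_sdiff hsub).symm
    have hDsum : ∑ z ∈ Dfin, F z = (l1.map F).sum + (l2.map F).sum := by
      rw [hDfin, List.sum_toFinset _ hl12, List.map_append, List.sum_append]
    have hS1 : (l1.map F).sum
        = (p.darts.map fun d =>
            (u d.toProd.2 - u d.toProd.1) ^ 2 * w d.toProd.1 d.toProd.2).sum := by
      rw [hl1def, List.map_map]
      rfl
    have hS2 : (l2.map F).sum
        = (p.darts.map fun d =>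
            (u d.toProd.2 - u d.toProd.1) ^ 2 * w d.toProd.1 d.toProd.2).sum := by
      rw [hl2def, List.map_map]
      have hfun : (F ∘ fun d : G.Dart => d.toProd.swap)
          = fun d : G.Dart => (u d.toProd.2 - u d.toProd.1) ^ 2 * w d.toProd.1 d.toProd.2 := by
        funext d
        simp only [Function.comp_apply, hF, Prod.snd_swap, Prod.fst_swap]
        rw [← hw_symm]
        ring
      rw [hfun]
    have hen : energy w u = (1 / 2) * ∑ z ∈ Finset.univ ×ˢ Finset.univ, F z := by
      rw [energy, Finset.sum_product]
    rw [hen, htot, hDsum, hS1, hS2]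
    ring
  · intro x y hadj hnot
    rw [hC, Finset.mem_sdiff]
    refine ⟨by simp, fun hmem => hnot ?_⟩
    rw [hDfin, List.mem_toFinset, List.mem_append] at hmem
    rcases hmem with hmem | hmem
    · obtain ⟨d, hd, hzd⟩ := List.mem_map.mp hmem
      have : s(x, y) = d.edge := by
        unfold SimpleGraph.Dart.edge; rw [hzd]
      rw [this, hedges]
      exact List.mem_map_of_mem hd
    · obtain ⟨d, hd, hzd⟩ := List.mem_map.mp hmem
      have : s(x, y) = d.edge := by
        unfold SimpleGraph.Dart.edge
        have h1 := congrArg Prod.fst hzd; have h2 := congrArg Prod.snd hzd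
        simp only [Prod.fst_swap, Prod.snd_swap] at h1 h2
        rw [← h1, ← h2]; exact Sym2.eq_swap
      rw [this, hedges]
      exact List.mem_map_of_mem hd

lemma energy_nonneg [Fintype V] {w : V → V → ℝ} (hw : ∀ x y, 0 ≤ w x y) (u : V → ℝ) :
    0 ≤ energy w u := by
  rw [energy]
  have h1 : ∀ x : V, (0:ℝ) ≤ ∑ y, (u y - u x) ^ 2 * w x y := fun x =>
    Finset.sum_nonneg fun y _ => mul_nonneg (sq_nonneg _) (hw x y)
  have h2 := Finset.sum_nonneg fun x (_ : x ∈ Finset.univ) => h1 x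
  linarith

lemma sigma2_attained [Fintype V] (B : Finset V) (m : V → ℝ) (w : V → V → ℝ)
    (hm : ∀ x, 0 < m x) (hw_nonneg : ∀ x y, 0 ≤ w x y)
    {a0 b0 : V} (ha0 : a0 ∈ B) (hb0 : b0 ∈ B) (hab : a0 ≠ b0) :
    ∃ u : V → ℝ, (∑ x ∈ B, u x * m x = 0) ∧ (∑ x ∈ B, (u x) ^ 2 * m x = 1) ∧
      (∀ r ∈ {r : ℝ | ∃ u : V → ℝ, (∃ x ∈ B, u x ≠ 0) ∧ (∑ x ∈ B, u x * m x = 0) ∧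
        r = energy w u / ∑ x ∈ B, (u x) ^ 2 * m x}, energy w u ≤ r) ∧
      sigma2 B m w = energy w u := by
  classical
  set R : ℝ := Real.sqrt (∑ x ∈ B, 1 / m x) with hRdef
  have hsum_nonneg : (0:ℝ) ≤ ∑ x ∈ B, 1 / m x :=
    Finset.sum_nonneg fun x _ => (one_div_pos.mpr (hm x)).le
  have hR0 : 0 ≤ R := Real.sqrt_nonneg _
  have hR2 : R ^ 2 = ∑ x ∈ B, 1 / m x := Real.sq_sqrt hsum_nonneg
  set clamp : ℝ → ℝ := fun t => max (min R t) (-R) with hclamp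
  have hclamp_le : ∀ t, -R ≤ clamp t ∧ clamp t ≤ R := fun t =>
    ⟨le_max_right _ _, max_le (min_le_left _ _) (by linarith)⟩
  have hclamp_eq : ∀ t, |t| ≤ R → clamp t = t := by
    intro t ht
    rw [abs_le] at ht
    show max (min R t) (-R) = t
    rw [min_eq_right ht.2, max_eq_left ht.1]
  have hclamp_lip : ∀ s t, |clamp s - clamp t| ≤ |s - t| := by
    intro s t
    refine (abs_max_sub_max_le_abs _ _ _).trans ?_
    refine (abs_min_sub_min_le_max R s R t).trans ?_
    simp
  have hbdd : ∀ u : V → ℝ, (∑ x ∈ B, (u x) ^ 2 * m x = 1) → ∀ x ∈ B, |u x| ≤ R := by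
    intro u hu x hx
    have h1 : (u x) ^ 2 * m x ≤ 1 := by
      rw [← hu]
      exact Finset.single_le_sum (f := fun y => (u y) ^ 2 * m y)
        (fun y _ => mul_nonneg (sq_nonneg _) (hm y).le) hx
    have h2 : (u x) ^ 2 ≤ 1 / m x := by
      rw [le_div_iff₀ (hm x)]; exact h1
    have h3 : (u x) ^ 2 ≤ R ^ 2 := by
      rw [hR2]
      exact h2.trans (Finset.single_le_sum (f := fun y => 1 / m y)
        (fun y _ => (one_div_pos.mpr (hm y)).le) hx)
    calc |u x| = Real.sqrt ((u x) ^ 2) := (Real.sqrt_sq_eq_abs _).symm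
    _ ≤ Real.sqrt (R ^ 2) := Real.sqrt_le_sqrt h3
    _ = R := by rw [Real.sqrt_sq hR0]
  have hnorm : ∀ u : V → ℝ, (∑ x ∈ B, u x * m x = 0) → 0 < (∑ x ∈ B, (u x) ^ 2 * m x) →
      ∃ v : V → ℝ, (∀ x, -R ≤ v x ∧ v x ≤ R) ∧ (∑ x ∈ B, v x * m x = 0) ∧
        (∑ x ∈ B, (v x) ^ 2 * m x = 1) ∧
        energy w v ≤ energy w u / (∑ x ∈ B, (u x) ^ 2 * m x) := by
    intro u hMu hDu
    set s : ℝ := Real.sqrt (∑ x ∈ B, (u x) ^ 2 * m x) with hsdef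
    have hs : 0 < s := Real.sqrt_pos.mpr hDu
    have hs2 : s ^ 2 = ∑ x ∈ B, (u x) ^ 2 * m x := Real.sq_sqrt hDu.le
    set v1 : V → ℝ := fun x => u x / s with hv1
    have hD1 : ∑ x ∈ B, (v1 x) ^ 2 * m x = 1 := by
      have hcong : ∀ x ∈ B, (v1 x) ^ 2 * m x = ((u x) ^ 2 * m x) / s ^ 2 := by
        intro x _
        show (u x / s) ^ 2 * m x = ((u x) ^ 2 * m x) / s ^ 2
        field_simp
      rw [Finset.sum_congr rfl hcong, ← Finset.sum_div, ← hs2]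
      field_simp
    have hM1 : ∑ x ∈ B, v1 x * m x = 0 := by
      have hcong : ∀ x ∈ B, v1 x * m x = (u x * m x) / s := by
        intro x _
        show (u x / s) * m x = (u x * m x) / s
        ring
      rw [Finset.sum_congr rfl hcong, ← Finset.sum_div, hMu, zero_div]
    have hE1 : energy w v1 = energy w u / (∑ x ∈ B, (u x) ^ 2 * m x) := by
      rw [energy, energy, ← hs2]
      have hcong : ∀ x : V, ∑ y, (v1 y - v1 x) ^ 2 * w x y
          = (∑ y, (u y - u x) ^ 2 * w x y) / s ^ 2 := by
        intro x
        rw [Finset.sum_div]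
        refine Finset.sum_congr rfl fun y _ => ?_
        show (u y / s - u x / s) ^ 2 * w x y = ((u y - u x) ^ 2 * w x y) / s ^ 2
        field_simp
        try ring
      rw [Finset.sum_congr rfl fun x _ => hcong x, ← Finset.sum_div]
      ring
    have hb1 : ∀ x ∈ B, |v1 x| ≤ R := hbdd v1 hD1
    set v : V → ℝ := fun x => clamp (v1 x) with hv
    have hvB : ∀ x ∈ B, v x = v1 x := fun x hx => hclamp_eq _ (hb1 x hx)
    refine ⟨v, fun x => hclamp_le _, ?_, ?_, ?_⟩
    · rw [← hM1]
      exact Finset.sum_congr rfl fun x hx => by rw [hvB x hx]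
    · rw [← hD1]
      exact Finset.sum_congr rfl fun x hx => by rw [hvB x hx]
    · rw [← hE1, energy, energy]
      have key : ∀ x y : V, (v y - v x) ^ 2 * w x y ≤ (v1 y - v1 x) ^ 2 * w x y := by
        intro x y
        refine mul_le_mul_of_nonneg_right ?_ (hw_nonneg x y)
        have h1 : |v y - v x| ≤ |v1 y - v1 x| := hclamp_lip _ _
        calc (v y - v x) ^ 2 = |v y - v x| ^ 2 := (sq_abs _).symm
        _ ≤ |v1 y - v1 x| ^ 2 := pow_le_pow_left₀ (abs_nonneg _) h1 2
        _ = (v1 y - v1 x) ^ 2 := sq_abs _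
      have hle : ∑ x, ∑ y, (v y - v x) ^ 2 * w x y ≤ ∑ x, ∑ y, (v1 y - v1 x) ^ 2 * w x y :=
        Finset.sum_le_sum fun x _ => Finset.sum_le_sum fun y _ => key x y
      linarith
  set K : Set (V → ℝ) :=
    {u | ∀ x, u x ∈ Set.Icc (-R) R} ∩
      ({u | ∑ x ∈ B, u x * m x = 0} ∩ {u | ∑ x ∈ B, (u x) ^ 2 * m x = 1}) with hK
  have cM : Continuous fun u : V → ℝ => ∑ x ∈ B, u x * m x :=
    continuous_finset_sum _ fun x _ => (continuous_apply x).mul continuous_const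
  have cD : Continuous fun u : V → ℝ => ∑ x ∈ B, (u x) ^ 2 * m x :=
    continuous_finset_sum _ fun x _ => ((continuous_apply x).pow 2).mul continuous_const
  have cE : Continuous (energy w) := by
    apply Continuous.mul continuous_const
    exact continuous_finset_sum _ fun x _ => continuous_finset_sum _ fun y _ =>
      (((continuous_apply y).sub (continuous_apply x)).pow 2).mul continuous_const
  have hKc : IsCompact K := by
    have h1 : IsCompact {u : V → ℝ | ∀ x, u x ∈ Set.Icc (-R) R} := by
      have heq : {u : V → ℝ | ∀ x, u x ∈ Set.Icc (-R) R}
          = Set.univ.pi (fun _ : V => Set.Icc (-R) R) := by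
        ext u
        simp only [Set.mem_setOf_eq, Set.mem_pi, Set.mem_univ, forall_true_left, true_implies]
      rw [heq]
      exact isCompact_univ_pi fun _ => isCompact_Icc
    exact h1.inter_right (IsClosed.inter (isClosed_eq cM continuous_const)
      (isClosed_eq cD continuous_const))
  have hKne : K.Nonempty := by
    set u0 : V → ℝ := fun x => if x = a0 then m b0 else if x = b0 then -(m a0) else 0 with hu0
    have hsub : {a0, b0} ⊆ B := by
      intro x hx; rcases Finset.mem_insert.mp hx with rfl | hx
      · exact ha0
      · rw [Finset.mem_singleton.mp hx]; exact hb0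
    have hzero : ∀ x ∈ B, x ∉ ({a0, b0} : Finset V) → u0 x = 0 := by
      intro x _ hx
      simp only [Finset.mem_insert, Finset.mem_singleton, not_or] at hx
      show (if x = a0 then m b0 else if x = b0 then -(m a0) else 0) = 0
      rw [if_neg hx.1, if_neg hx.2]
    have hM0 : ∑ x ∈ B, u0 x * m x = 0 := by
      rw [← Finset.sum_subset hsub (fun x hx hx' => by rw [hzero x hx hx']; ring)]
      rw [Finset.sum_pair hab]
      show (if a0 = a0 then m b0 else _) * m a0
          + (if b0 = a0 then m b0 else if b0 = b0 then -(m a0) else 0) * m b0 = 0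
      rw [if_pos rfl, if_neg (Ne.symm hab), if_pos rfl]
      ring
    have hD0 : ∑ x ∈ B, (u0 x) ^ 2 * m x = (m b0) ^ 2 * m a0 + (m a0) ^ 2 * m b0 := by
      rw [← Finset.sum_subset hsub (fun x hx hx' => by rw [hzero x hx hx']; ring)]
      rw [Finset.sum_pair hab]
      show (if a0 = a0 then m b0 else _) ^ 2 * m a0
          + (if b0 = a0 then m b0 else if b0 = b0 then -(m a0) else 0) ^ 2 * m b0 = _
      rw [if_pos rfl, if_neg (Ne.symm hab), if_pos rfl]
      ring
    have hD0pos : 0 < ∑ x ∈ B, (u0 x) ^ 2 * m x := by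
      rw [hD0]
      have h1 := hm a0; have h2 := hm b0
      positivity
    obtain ⟨v, hv1, hv2, hv3, _⟩ := hnorm u0 hM0 hD0pos
    exact ⟨v, fun x => Set.mem_Icc.mpr (hv1 x), hv2, hv3⟩
  obtain ⟨ustar, huK, hmin⟩ := hKc.exists_isMinOn hKne (cE.continuousOn)
  obtain ⟨huIcc, huM, huD⟩ := huK
  have huM : ∑ x ∈ B, ustar x * m x = 0 := huM
  have huD : ∑ x ∈ B, (ustar x) ^ 2 * m x = 1 := huD
  have hexx : ∃ x ∈ B, ustar x ≠ 0 := by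
    by_contra hno
    push_neg at hno
    have hz : ∑ x ∈ B, (ustar x) ^ 2 * m x = 0 :=
      Finset.sum_eq_zero fun x hx => by rw [hno x hx]; ring
    rw [huD] at hz
    norm_num at hz
  have hleast : IsLeast {r : ℝ | ∃ u : V → ℝ, (∃ x ∈ B, u x ≠ 0) ∧ (∑ x ∈ B, u x * m x = 0) ∧
      r = energy w u / ∑ x ∈ B, (u x) ^ 2 * m x} (energy w ustar) := by
    constructor
    · exact ⟨ustar, hexx, huM, by rw [huD, div_one]⟩
    · rintro r ⟨u, ⟨x, hxB, hux⟩, hMu, rfl⟩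
      have hxpos : 0 < (u x) ^ 2 := by
        have h2 : 0 < |u x| ^ 2 := pow_pos (abs_pos.mpr hux) 2
        rwa [sq_abs] at h2
      have hDupos : 0 < ∑ x ∈ B, (u x) ^ 2 * m x :=
        Finset.sum_pos' (fun y _ => mul_nonneg (sq_nonneg _) (hm y).le)
          ⟨x, hxB, mul_pos hxpos (hm x)⟩
      obtain ⟨v, hv1, hv2, hv3, hv4⟩ := hnorm u hMu hDupos
      have hvK : v ∈ K := ⟨fun y => Set.mem_Icc.mpr (hv1 y), hv2, hv3⟩
      exact (hmin hvK).trans hv4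
  exact ⟨ustar, huM, huD, fun r hr => hleast.2 hr, by rw [sigma2]; exact hleast.csInf_eq⟩

end PerrinAux

set_option maxHeartbeats 1000000 in
/-- **Rigidity, part (2)** (Theorem 1.4 (2)).
If a connected weighted finite graph with boundary `B`, `|B| ≥ 2`, satisfies
`σ₂ = w₀ V_B / ((V_B - m₀)² d_B)`, then any two distinct boundary vertices are joined by a
unique path `P : v₀ ∼ v₁ ∼ ⋯ ∼ v_{d_B}`; moreover the path has length `d_B` and all its
edge weights equal `w₀`. -/
theorem extended_perrin_rigidity_path [Fintype V]
    (G : SimpleGraph V) (hG : G.Connected)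
    (B : Finset V) (hB : 2 ≤ B.card)
    (m : V → ℝ) (w : V → V → ℝ)
    (hm : ∀ x, 0 < m x)
    (hw_symm : ∀ x y, w x y = w y x)
    (hw_pos : ∀ x y, G.Adj x y → 0 < w x y)
    (hw_zero : ∀ x y, ¬ G.Adj x y → w x y = 0)
    (heq : sigma2 B m w =
      minEdgeWeight G w * (∑ x ∈ B, m x) /
        (((∑ x ∈ B, m x) - minBoundaryMeasure B m) ^ 2 * (boundaryDiam G B : ℝ))) :
    ∀ x₀ ∈ B, ∀ x₁ ∈ B, x₀ ≠ x₁ →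
      ∃ p : G.Walk x₀ x₁, p.IsPath ∧ p.length = boundaryDiam G B ∧
        (∀ d ∈ p.darts, w d.toProd.1 d.toProd.2 = minEdgeWeight G w) ∧
        ∀ q : G.Walk x₀ x₁, q.IsPath → q = p := by
  classical
  have hw_nonneg : ∀ x y, 0 ≤ w x y := by
    intro x y
    by_cases h : G.Adj x y
    · exact (hw_pos _ _ h).le
    · rw [hw_zero _ _ h]
  have hBne : B.Nonempty := Finset.card_pos.mp (by omega)
  obtain ⟨a0, ha0, b0, hb0, hab0⟩ : ∃ a ∈ B, ∃ b ∈ B, a ≠ b :=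
    Finset.one_lt_card.mp (show 1 < B.card by omega)
  set V0 : ℝ := ∑ x ∈ B, m x with hV0def
  set m0 : ℝ := minBoundaryMeasure B m with hm0def
  set w0 : ℝ := minEdgeWeight G w with hw0def
  set dB : ℕ := boundaryDiam G B with hdBdef
  -- facts about m0
  have hSm_fin : {r : ℝ | ∃ x ∈ B, m x = r}.Finite :=
    ((B.image m).finite_toSet).subset
      (fun r ⟨x, hx, hr⟩ => Finset.mem_coe.mpr (Finset.mem_image.mpr ⟨x, hx, hr⟩))
  have hSm_ne : {r : ℝ | ∃ x ∈ B, m x = r}.Nonempty := ⟨m a0, a0, ha0, rfl⟩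
  have hm0mem : ∃ x ∈ B, m x = m0 := hSm_ne.csInf_mem hSm_fin
  have hm0le : ∀ x ∈ B, m0 ≤ m x := fun x hx =>
    csInf_le hSm_fin.bddBelow ⟨x, hx, rfl⟩
  obtain ⟨xm, hxm, hxmev⟩ := hm0mem
  have hm0pos : 0 < m0 := hxmev ▸ hm xm
  -- facts about w0
  have hSw_fin : {r : ℝ | ∃ x y, G.Adj x y ∧ w x y = r}.Finite := by
    refine (Set.finite_range fun p : V × V => w p.1 p.2).subset ?_
    rintro r ⟨x, y, _, rfl⟩
    exact ⟨(x, y), rfl⟩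
  have hSw_ne : {r : ℝ | ∃ x y, G.Adj x y ∧ w x y = r}.Nonempty := by
    obtain ⟨pw⟩ := hG.preconnected a0 b0
    cases pw with
    | nil => exact absurd rfl hab0
    | cons h _ => exact ⟨_, _, _, h, rfl⟩
  have hw0mem : ∃ x y, G.Adj x y ∧ w x y = w0 := hSw_ne.csInf_mem hSw_fin
  have hw0le : ∀ x y, G.Adj x y → w0 ≤ w x y := fun x y h =>
    csInf_le hSw_fin.bddBelow ⟨x, y, h, rfl⟩
  have hw0pos : 0 < w0 := by
    obtain ⟨x, y, hadj, hevw⟩ := hw0mem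
    exact hevw ▸ hw_pos x y hadj
  -- facts about V0
  have hV0pos : 0 < V0 := Finset.sum_pos (fun x _ => hm x) hBne
  have hV0m0 : m0 < V0 := by
    obtain ⟨y, hy, hyne⟩ := Finset.exists_mem_ne (show 1 < B.card by omega) xm
    have hpair : ({xm, y} : Finset V) ⊆ B := by
      intro z hz; rcases Finset.mem_insert.mp hz with rfl | hz
      · exact hxm
      · rw [Finset.mem_singleton.mp hz]; exact hy
    have hle : ∑ x ∈ ({xm, y} : Finset V), m x ≤ V0 :=
      Finset.sum_le_sum_of_subset_of_nonneg hpair (fun x _ _ => (hm x).le)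
    rw [Finset.sum_pair (Ne.symm hyne)] at hle
    have hmy := hm y
    linarith only [hle, hmy, hxmev]
  -- dB ≥ 1
  have hdist0 : 0 < G.dist a0 b0 := hG.pos_dist_of_ne hab0
  have hdistle : G.dist a0 b0 ≤ dB := by
    rw [hdBdef, boundaryDiam]
    have hmemp : (a0, b0) ∈ B ×ˢ B := Finset.mem_product.mpr ⟨ha0, hb0⟩
    exact Finset.le_sup (f := fun p : V × V => G.dist p.1 p.2) hmemp
  have hdB1 : 1 ≤ dB := le_trans hdist0 hdistle
  have hdBposR : (0:ℝ) < (dB : ℝ) := by exact_mod_cast hdB1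
  -- the minimizer
  obtain ⟨u, huM, huD, hulb, hsig⟩ :=
    PerrinAux.sigma2_attained B m w hm hw_nonneg ha0 hb0 hab0
  have hE : energy w u = w0 * V0 / ((V0 - m0) ^ 2 * (dB : ℝ)) := by
    rw [← hsig, heq]
  have hEpos : 0 < energy w u := by
    rw [hE]
    apply div_pos (mul_pos hw0pos hV0pos)
    exact mul_pos (pow_pos (by linarith only [hV0m0]) 2) hdBposR
  -- min and max of u on B
  obtain ⟨a, haB, hamin⟩ := B.exists_min_image u hBne
  obtain ⟨b, hbB, hbmax⟩ := B.exists_max_image u hBne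
  have hrange : ∀ x ∈ B, u a ≤ u x ∧ u x ≤ u b := fun x hx => ⟨hamin x hx, hbmax x hx⟩
  have hMμ : u a < u b := by
    by_contra hcon
    push_neg at hcon
    have hconst : ∀ x ∈ B, u x = u a := fun x hx =>
      le_antisymm ((hrange x hx).2.trans hcon) (hrange x hx).1
    have hmean : ∑ x ∈ B, u x * m x = u a * V0 := by
      rw [hV0def, Finset.mul_sum]
      exact Finset.sum_congr rfl fun x hx => by rw [hconst x hx]
    rw [huM] at hmean
    have hμ0 : u a = 0 := by
      rcases mul_eq_zero.mp hmean.symm with h | h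
      · exact h
      · exact absurd h hV0pos.ne'
    have hz : ∑ x ∈ B, (u x) ^ 2 * m x = 0 :=
      Finset.sum_eq_zero fun x hx => by rw [hconst x hx, hμ0]; ring
    rw [huD] at hz
    norm_num at hz
  have hs0 : 0 < u b - u a := by linarith only [hMμ]
  -- per-vertex boundary bound
  have hux_bound : ∀ x ∈ B, |u x| * V0 ≤ (u b - u a) * (V0 - m0) := by
    intro x hx
    have h1 : u x * V0 = ∑ y ∈ B, (u x - u y) * m y := by
      rw [Finset.sum_congr rfl (fun y _ => sub_mul (u x) (u y) (m y)),
        Finset.sum_sub_distrib, ← Finset.mul_sum, huM, sub_zero, hV0def]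
    have h2 : |u x| * V0 = |∑ y ∈ B, (u x - u y) * m y| := by
      rw [← h1, abs_mul, abs_of_pos hV0pos]
    rw [h2]
    calc |∑ y ∈ B, (u x - u y) * m y| ≤ ∑ y ∈ B, |(u x - u y) * m y| :=
        Finset.abs_sum_le_sum_abs _ _
    _ = ∑ y ∈ B.erase x, |(u x - u y) * m y| := by
        rw [← Finset.add_sum_erase _ _ hx]
        simp
    _ ≤ ∑ y ∈ B.erase x, (u b - u a) * m y := by
        refine Finset.sum_le_sum fun y hy => ?_
        have hyB := Finset.mem_of_mem_erase hy
        rw [abs_mul, abs_of_pos (hm y)]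
        refine mul_le_mul_of_nonneg_right ?_ (hm y).le
        rw [abs_le]
        constructor
        · linarith only [(hrange x hx).1, (hrange y hyB).2]
        · linarith only [(hrange x hx).2, (hrange y hyB).1]
    _ = (u b - u a) * (V0 - m x) := by
        rw [← Finset.mul_sum, Finset.sum_erase_eq_sub hx, hV0def]
    _ ≤ (u b - u a) * (V0 - m0) := by
        refine mul_le_mul_of_nonneg_left ?_ hs0.le
        linarith only [hm0le x hx]
  set c' : ℝ := (u b - u a) * (V0 - m0) / V0 with hc'def
  have hc'pos : 0 < c' := div_pos (mul_pos hs0 (by linarith only [hV0m0])) hV0pos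
  have hux_sq : ∀ x ∈ B, (u x) ^ 2 ≤ c' ^ 2 := by
    intro x hx
    have h1 : |u x| ≤ c' := by
      rw [hc'def, le_div_iff₀ hV0pos]
      exact hux_bound x hx
    calc (u x) ^ 2 = |u x| ^ 2 := (sq_abs _).symm
    _ ≤ c' ^ 2 := pow_le_pow_left₀ (abs_nonneg _) h1 2
  have hchain1 : (1:ℝ) ≤ c' ^ 2 * V0 := by
    rw [← huD]
    calc ∑ x ∈ B, (u x) ^ 2 * m x ≤ ∑ x ∈ B, c' ^ 2 * m x :=
        Finset.sum_le_sum fun x hx =>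
          mul_le_mul_of_nonneg_right (hux_sq x hx) (hm x).le
    _ = c' ^ 2 * V0 := by rw [← Finset.mul_sum, hV0def]
  have hc2 : c' ^ 2 * V0 = (u b - u a) ^ 2 * (V0 - m0) ^ 2 / V0 := by
    rw [hc'def]; field_simp
  have hkey1 : V0 / (V0 - m0) ^ 2 ≤ (u b - u a) ^ 2 := by
    rw [div_le_iff₀ (pow_pos (by linarith only [hV0m0] : (0:ℝ) < V0 - m0) 2)]
    have h1 := hchain1
    rw [hc2, le_div_iff₀ hV0pos] at h1
    linarith only [h1]
  -- the geodesic
  have habne : a ≠ b := fun h => (ne_of_lt hMμ) (by rw [h])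
  obtain ⟨p0, hp0len⟩ := (hG.preconnected a b).exists_walk_length_eq_dist
  set p : G.Walk a b := p0.bypass with hpdef
  have hppath : p.IsPath := p0.bypass_isPath
  have hplen : p.length = G.dist a b :=
    le_antisymm (hp0len ▸ p0.length_bypass_le) (SimpleGraph.dist_le p)
  set L : ℕ := p.length with hLdef
  have hL1 : 1 ≤ L := by
    rw [hplen]
    exact hG.pos_dist_of_ne habne
  have hLledB : L ≤ dB := by
    rw [hplen, hdBdef, boundaryDiam]
    have hmemp : (a, b) ∈ B ×ˢ B := Finset.mem_product.mpr ⟨haB, hbB⟩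
    exact Finset.le_sup (f := fun p : V × V => G.dist p.1 p.2) hmemp
  have hLposR : (0:ℝ) < (L : ℝ) := by exact_mod_cast hL1
  -- dart sums
  set S1 : ℝ := (p.darts.map fun d => (u d.toProd.2 - u d.toProd.1) ^ 2).sum with hS1def
  set S2 : ℝ := (p.darts.map fun d =>
    (u d.toProd.2 - u d.toProd.1) ^ 2 * w d.toProd.1 d.toProd.2).sum with hS2def
  have htele : (p.darts.map fun d => u d.toProd.2 - u d.toProd.1).sum = u b - u a :=
    PerrinAux.walk_telescope u p
  have hdartslen : p.darts.length = L := p.length_darts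
  -- energy decomposition
  obtain ⟨C, hCdecomp, hCmem⟩ := PerrinAux.energy_decomp G w hw_symm u p hppath.edges_nodup
  rw [← hS2def] at hCdecomp
  have hQnonneg : 0 ≤ ∑ z ∈ C, (u z.2 - u z.1) ^ 2 * w z.1 z.2 :=
    Finset.sum_nonneg fun z _ => mul_nonneg (sq_nonneg _) (hw_nonneg _ _)
  have hS2E : S2 ≤ energy w u := by rw [hCdecomp]; linarith only [hQnonneg]
  -- Cauchy–Schwarz via the variance expansion
  set t : ℝ := (u b - u a) / (L : ℝ) with htdef
  have htpos : 0 < t := div_pos hs0 hLposR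
  have hexpand := PerrinAux.list_sum_sq_expand p.darts
    (fun d => u d.toProd.2 - u d.toProd.1) t
  rw [htele, hdartslen, ← hS1def] at hexpand
  have hTnn : 0 ≤ (p.darts.map fun d => ((u d.toProd.2 - u d.toProd.1) - t) ^ 2).sum :=
    List.sum_nonneg (by
      intro x hx
      obtain ⟨d, _, rfl⟩ := List.mem_map.mp hx
      exact sq_nonneg _)
  have hCS : (u b - u a) ^ 2 ≤ (L : ℝ) * S1 := by
    have h0 : 0 ≤ S1 - 2 * t * (u b - u a) + (L : ℝ) * t ^ 2 := by
      rw [← hexpand]; exact hTnn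
    have h1 : S1 - 2 * t * (u b - u a) + (L : ℝ) * t ^ 2
        = S1 - (u b - u a) ^ 2 / (L : ℝ) := by
      rw [htdef]; field_simp; ring
    rw [h1] at h0
    have h2 : (u b - u a) ^ 2 / (L : ℝ) ≤ S1 := by linarith only [h0]
    calc (u b - u a) ^ 2 = (u b - u a) ^ 2 / (L : ℝ) * (L : ℝ) := by
          field_simp
    _ ≤ S1 * (L : ℝ) := mul_le_mul_of_nonneg_right h2 hLposR.le
    _ = (L : ℝ) * S1 := mul_comm _ _
  have hS1S2 : w0 * S1 ≤ S2 := by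
    rw [hS1def, hS2def, ← PerrinAux.list_sum_map_mul_left]
    refine List.sum_le_sum fun d _ => ?_
    rw [mul_comm]
    exact mul_le_mul_of_nonneg_left (hw0le _ _ d.adj) (sq_nonneg _)
  -- the chain of inequalities, all forced to be equalities
  have d1 : w0 * (u b - u a) ^ 2 ≤ w0 * ((L : ℝ) * S1) :=
    mul_le_mul_of_nonneg_left hCS hw0pos.le
  have d2 : w0 * ((L : ℝ) * S1) ≤ (L : ℝ) * S2 := by
    nlinarith only [mul_le_mul_of_nonneg_left hS1S2 hLposR.le]
  have d3 : (L : ℝ) * S2 ≤ (L : ℝ) * energy w u :=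
    mul_le_mul_of_nonneg_left hS2E hLposR.le
  have hLledBR : (L : ℝ) ≤ (dB : ℝ) := Nat.cast_le.mpr hLledB
  have d4 : (L : ℝ) * energy w u ≤ (dB : ℝ) * energy w u :=
    mul_le_mul_of_nonneg_right hLledBR hEpos.le
  have d5 : (dB : ℝ) * energy w u = w0 * (V0 / (V0 - m0) ^ 2) := by
    rw [hE]
    have hne1 : (V0 - m0) ≠ 0 := by linarith only [hV0m0]
    have hne2 : (dB : ℝ) ≠ 0 := hdBposR.ne'
    field_simp
  have d6 : w0 * (V0 / (V0 - m0) ^ 2) ≤ w0 * (u b - u a) ^ 2 :=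
    mul_le_mul_of_nonneg_left hkey1 hw0pos.le
  have hE1 : w0 * ((L : ℝ) * S1) = w0 * (u b - u a) ^ 2 := by linarith only [d1, d2, d3, d4, d5, d6]
  have hLS1 : (L : ℝ) * S1 = (u b - u a) ^ 2 := mul_left_cancel₀ hw0pos.ne' hE1
  have hE2 : (L : ℝ) * S2 = w0 * ((L : ℝ) * S1) := by linarith only [d1, d2, d3, d4, d5, d6]
  have hS2w0S1 : S2 = w0 * S1 := by
    have h' : (L : ℝ) * S2 = (L : ℝ) * (w0 * S1) := by linear_combination hE2
    exact mul_left_cancel₀ hLposR.ne' h'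
  have hE3 : (L : ℝ) * energy w u = (L : ℝ) * S2 := by linarith only [d1, d2, d3, d4, d5, d6]
  have hES2 : energy w u = S2 := mul_left_cancel₀ hLposR.ne' hE3
  have hE4 : (dB : ℝ) * energy w u = (L : ℝ) * energy w u := by linarith only [d1, d2, d3, d4, d5, d6]
  have hLdB : L = dB := by
    have h' : (dB : ℝ) = (L : ℝ) := mul_right_cancel₀ hEpos.ne' hE4
    exact_mod_cast h'.symm
  have hE5 : w0 * (u b - u a) ^ 2 = w0 * (V0 / (V0 - m0) ^ 2) := by linarith only [d1, d2, d3, d4, d5, d6]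
  have hq1 : (u b - u a) ^ 2 = V0 / (V0 - m0) ^ 2 := mul_left_cancel₀ hw0pos.ne' hE5
  -- vanishing of the off-path part of the energy
  have hQ0 : ∑ z ∈ C, (u z.2 - u z.1) ^ 2 * w z.1 z.2 = 0 := by linarith only [hCdecomp, hES2]
  -- all darts of p have the same increment t
  have hS1v : S1 = (u b - u a) ^ 2 / (L : ℝ) := by
    rw [eq_div_iff hLposR.ne']
    linear_combination hLS1
  have hT0 : (p.darts.map fun d => ((u d.toProd.2 - u d.toProd.1) - t) ^ 2).sum = 0 := by
    rw [hexpand, hS1v, htdef]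
    field_simp
    try ring
  have hdiff : ∀ d ∈ p.darts, u d.toProd.2 - u d.toProd.1 = t := by
    intro d hd
    have hz := PerrinAux.list_sum_nonneg_zero
      (by intro x hx
          obtain ⟨d', _, rfl⟩ := List.mem_map.mp hx
          exact sq_nonneg _)
      hT0 _ (List.mem_map_of_mem (f := fun d => ((u d.toProd.2 - u d.toProd.1) - t) ^ 2) hd)
    have h0 : (u d.toProd.2 - u d.toProd.1) - t = 0 :=
      (pow_eq_zero_iff (two_ne_zero)).mp hz
    linarith only [h0]
  -- all darts of p have weight w0
  have hwdart : ∀ d ∈ p.darts, w d.toProd.1 d.toProd.2 = w0 := by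
    have hzsum : (p.darts.map fun d =>
        (u d.toProd.2 - u d.toProd.1) ^ 2 * w d.toProd.1 d.toProd.2
          - w0 * (u d.toProd.2 - u d.toProd.1) ^ 2).sum = 0 := by
      rw [PerrinAux.list_sum_map_sub, PerrinAux.list_sum_map_mul_left, ← hS2def, ← hS1def]
      linarith only [hS2w0S1]
    intro d hd
    have hterm := PerrinAux.list_sum_nonneg_zero
      (by intro x hx
          obtain ⟨d', hd', rfl⟩ := List.mem_map.mp hx
          nlinarith only [hw0le _ _ d'.adj, sq_nonneg (u d'.toProd.2 - u d'.toProd.1)])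
      hzsum _ (List.mem_map_of_mem (f := fun d =>
        (u d.toProd.2 - u d.toProd.1) ^ 2 * w d.toProd.1 d.toProd.2
          - w0 * (u d.toProd.2 - u d.toProd.1) ^ 2) hd)
    have hdt := hdiff d hd
    have hpos2 : 0 < (u d.toProd.2 - u d.toProd.1) ^ 2 := by
      rw [hdt]; positivity
    have hfac : (u d.toProd.2 - u d.toProd.1) ^ 2 * (w d.toProd.1 d.toProd.2 - w0) = 0 := by
      linear_combination hterm
    rcases mul_eq_zero.mp hfac with h | h
    · exact absurd h hpos2.ne'
    · have hsub0 := sub_eq_zero.mp h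
      linarith only [hsub0]
  -- off-path edges have equal u-values
  have hoff : ∀ x y, G.Adj x y → s(x, y) ∉ p.edges → u y = u x := by
    intro x y hadj hne
    have hmem := hCmem x y hadj hne
    have hterm := (Finset.sum_eq_zero_iff_of_nonneg
      (fun z (_ : z ∈ C) => mul_nonneg (sq_nonneg (u z.2 - u z.1)) (hw_nonneg z.1 z.2))).mp
      hQ0 (x, y) hmem
    rcases mul_eq_zero.mp hterm with h | h
    · exact sub_eq_zero.mp ((pow_eq_zero_iff (two_ne_zero)).mp h)
    · exact absurd h (hw_pos x y hadj).ne'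
  -- edges of p have increment ±t
  have hedge : ∀ x y : V, s(x, y) ∈ p.edges → u y - u x = t ∨ u y - u x = -t := by
    intro x y he
    have hedges : p.edges = p.darts.map SimpleGraph.Dart.edge := rfl
    rw [hedges] at he
    obtain ⟨d, hd, hde⟩ := List.mem_map.mp he
    have hdv := hdiff d hd
    rcases SimpleGraph.dart_edge_eq_mk'_iff'.mp hde with ⟨h1, h2⟩ | ⟨h1, h2⟩
    · left
      rw [h1, h2] at hdv
      exact hdv
    · right
      rw [h1, h2] at hdv
      linarith only [hdv]
  -- uniqueness of the path from a to b
  have huniq : ∀ q : G.Walk a b, q.IsPath → q = p := by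
    intro q hq
    have hqtele : (q.darts.map fun d => u d.toProd.2 - u d.toProd.1).sum = u b - u a :=
      PerrinAux.walk_telescope u q
    have hbound : ∀ d ∈ q.darts,
        u d.toProd.2 - u d.toProd.1 ≤ (if d.edge ∈ p.edges then t else 0) := by
      intro d hd
      have hsp : s(d.toProd.1, d.toProd.2) = d.edge := by
        unfold SimpleGraph.Dart.edge
        rfl
      by_cases hmem : d.edge ∈ p.edges
      · rw [if_pos hmem]
        rcases hedge d.toProd.1 d.toProd.2 (by rw [hsp]; exact hmem) with h | h
        · exact h.le
        · linarith only [h, htpos]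
      · rw [if_neg hmem]
        have h0 : u d.toProd.2 = u d.toProd.1 := hoff _ _ d.adj (by rw [hsp]; exact hmem)
        rw [h0]
        simp
    have hsum_le : u b - u a
        ≤ ((q.darts.filter fun d => d.edge ∈ p.edges).length : ℝ) * t := by
      rw [← hqtele, ← PerrinAux.list_sum_ite_filter q.darts (fun d => d.edge ∈ p.edges) t]
      exact List.sum_le_sum hbound
    set lf := q.darts.filter (fun d => d.edge ∈ p.edges) with hlf
    have hqedges : q.edges = q.darts.map SimpleGraph.Dart.edge := rfl
    have hsubl : (lf.map SimpleGraph.Dart.edge).Sublist q.edges := by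
      rw [hqedges, hlf]
      exact List.filter_sublist.map _
    have hnd2 : (lf.map SimpleGraph.Dart.edge).Nodup := hsubl.nodup hq.edges_nodup
    have hmemsub : ∀ e ∈ lf.map SimpleGraph.Dart.edge, e ∈ p.edges := by
      intro e he
      obtain ⟨d, hd, rfl⟩ := List.mem_map.mp he
      rw [hlf, List.mem_filter] at hd
      simpa using hd.2
    have hfsub : (lf.map SimpleGraph.Dart.edge).toFinset ⊆ p.edges.toFinset := by
      intro e he
      rw [List.mem_toFinset] at he ⊢
      exact hmemsub e he
    have hcard1 : (lf.map SimpleGraph.Dart.edge).toFinset.card = lf.length := by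
      rw [List.toFinset_card_of_nodup hnd2, List.length_map]
    have hcard2 : p.edges.toFinset.card = L := by
      rw [List.toFinset_card_of_nodup hppath.edges_nodup, SimpleGraph.Walk.length_edges]
    have hlf_len : lf.length ≤ L := by
      calc lf.length = (lf.map SimpleGraph.Dart.edge).toFinset.card := hcard1.symm
      _ ≤ p.edges.toFinset.card := Finset.card_le_card hfsub
      _ = L := hcard2
    have hlf_ge : L ≤ lf.length := by
      have hLt : (L : ℝ) * t = u b - u a := by
        rw [htdef]; field_simp
      have h1 : (L : ℝ) * t ≤ (lf.length : ℝ) * t := by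
        rw [hLt]; exact hsum_le
      have h2 : (L : ℝ) ≤ (lf.length : ℝ) := le_of_mul_le_mul_right (by linarith only [h1]) htpos
      exact_mod_cast h2
    have hfeq : (lf.map SimpleGraph.Dart.edge).toFinset = p.edges.toFinset := by
      apply Finset.eq_of_subset_of_card_le hfsub
      rw [hcard1, hcard2]
      exact hlf_ge
    have hfinal : ∀ e ∈ p.edges, e ∈ q.edges := by
      intro e he
      have h1 : e ∈ (lf.map SimpleGraph.Dart.edge).toFinset := by
        rw [hfeq]
        exact List.mem_toFinset.mpr he
      rw [List.mem_toFinset] at h1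
      obtain ⟨d, hd, rfl⟩ := List.mem_map.mp h1
      rw [hlf, List.mem_filter] at hd
      rw [hqedges]
      exact List.mem_map_of_mem hd.1
    exact PerrinAux.path_eq_of_edges_subset p q hppath hq hfinal
  -- B = {a, b}
  have hc2V : c' ^ 2 * V0 = 1 := by
    rw [hc2, hq1]
    have hne1 : (V0 - m0) ≠ 0 := by linarith only [hV0m0]
    field_simp
  have hsum_eq : ∑ x ∈ B, (u x) ^ 2 * m x = ∑ x ∈ B, c' ^ 2 * m x := by
    rw [huD]
    rw [← Finset.mul_sum, ← hV0def, hc2V]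
  have hterm_eq : ∀ x ∈ B, (u x) ^ 2 * m x = c' ^ 2 * m x :=
    (Finset.sum_eq_sum_iff_of_le (fun x hx =>
      mul_le_mul_of_nonneg_right (hux_sq x hx) (hm x).le)).mp hsum_eq
  have husq : ∀ x ∈ B, (u x) ^ 2 = c' ^ 2 := fun x hx =>
    mul_right_cancel₀ (hm x).ne' (hterm_eq x hx)
  have hMnn : 0 ≤ u b := by
    have h1 : ∑ x ∈ B, u x * m x ≤ ∑ x ∈ B, u b * m x :=
      Finset.sum_le_sum fun x hx => mul_le_mul_of_nonneg_right (hrange x hx).2 (hm x).le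
    rw [huM, ← Finset.mul_sum, ← hV0def] at h1
    by_contra hcon
    push_neg at hcon
    nlinarith only [h1, hcon, hV0pos]
  have hμnp : u a ≤ 0 := by
    have h1 : ∑ x ∈ B, u a * m x ≤ ∑ x ∈ B, u x * m x :=
      Finset.sum_le_sum fun x hx => mul_le_mul_of_nonneg_right (hrange x hx).1 (hm x).le
    rw [huM, ← Finset.mul_sum, ← hV0def] at h1
    by_contra hcon
    push_neg at hcon
    nlinarith only [h1, hcon, hV0pos]
  have hMc : u b = c' := by
    have h2 := husq b hbB
    have hfac : (u b - c') * (u b + c') = 0 := by linear_combination h2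
    rcases mul_eq_zero.mp hfac with h | h
    · exact sub_eq_zero.mp h
    · exfalso
      have hub : u b = -c' := by linarith only [h]
      linarith only [hub, hMnn, hc'pos]
  have hμc : u a = -c' := by
    have h2 := husq a haB
    have hfac : (u a - c') * (u a + c') = 0 := by linear_combination h2
    rcases mul_eq_zero.mp hfac with h | h
    · exfalso
      have hua : u a = c' := sub_eq_zero.mp h
      linarith only [hua, hμnp, hc'pos]
    · linarith only [h]
  have hV02 : V0 = 2 * m0 := by
    have hsc : u b - u a = 2 * c' := by rw [hMc, hμc]; ring
    have hcv : c' * V0 = (u b - u a) * (V0 - m0) := by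
      rw [hc'def]; field_simp
    rw [hsc] at hcv
    have h5 : c' * V0 = c' * (2 * (V0 - m0)) := by linear_combination hcv
    have h6 : V0 = 2 * (V0 - m0) := mul_left_cancel₀ hc'pos.ne' h5
    linarith only [h6]
  have hcard2B : B.card = 2 := by
    have h1 : (B.card : ℝ) * m0 ≤ V0 := by
      rw [hV0def]
      calc (B.card : ℝ) * m0 = ∑ _x ∈ B, m0 := by
            rw [Finset.sum_const, nsmul_eq_mul]
      _ ≤ ∑ x ∈ B, m x := Finset.sum_le_sum fun x hx => hm0le x hx
    rw [hV02] at h1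
    have h2 : (B.card : ℝ) ≤ 2 := by nlinarith only [h1, hm0pos]
    have h3 : B.card ≤ 2 := by exact_mod_cast h2
    omega
  have hBab : B = {a, b} := by
    have hsub : ({a, b} : Finset V) ⊆ B := by
      intro z hz
      rcases Finset.mem_insert.mp hz with rfl | hz
      · exact haB
      · rw [Finset.mem_singleton.mp hz]; exact hbB
    exact (Finset.eq_of_subset_of_card_le hsub
      (by rw [Finset.card_pair habne, hcard2B])).symm
  -- final assembly
  have hplen_dB : p.length = dB := hLdB
  intro x₀ hx₀ x₁ hx₁ hne
  rw [hBab] at hx₀ hx₁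
  simp only [Finset.mem_insert, Finset.mem_singleton] at hx₀ hx₁
  rcases hx₀ with rfl | rfl <;> rcases hx₁ with rfl | rfl
  · exact absurd rfl hne
  · exact ⟨p, hppath, hplen_dB, hwdart, huniq⟩
  · refine ⟨p.reverse, hppath.reverse, ?_, ?_, ?_⟩
    · rw [SimpleGraph.Walk.length_reverse]
      exact hplen_dB
    · intro d hd
      rw [SimpleGraph.Walk.darts_reverse, List.mem_reverse, List.mem_map] at hd
      obtain ⟨d', hd', rfl⟩ := hd
      have hsw : w d'.symm.toProd.1 d'.symm.toProd.2 = w d'.toProd.1 d'.toProd.2 := by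
        rw [SimpleGraph.Dart.symm_toProd]
        simp only [Prod.fst_swap, Prod.snd_swap]
        exact (hw_symm _ _).symm
      rw [hsw]
      exact hwdart d' hd'
    · intro q hq
      have h1 : q.reverse = p := huniq q.reverse hq.reverse
      have h2 := congrArg SimpleGraph.Walk.reverse h1
      rwa [SimpleGraph.Walk.reverse_reverse] at h2
  · exact absurd rfl hne
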